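/- The map Θ : ℝ × M × S(M) → X defined by Θ(s, x, φ) = ℓ((φ_k^{s,x})_{k∈ℕ}) is measurable, and for all (s, φ): (a) Θ(s, x, φ) ∈ C([s,∞) : M) with Θ(s, x, φ)(s) = x for every x ∈ M; (b) Θ(s, φ_n(s), φ) = φ_n restricted to [s,∞) for every n with s_n ≤ s. -/

import Mathlib

open Set Filter MeasureTheory

noncomputable section

variable {M : Type*} [MetricSpace M] [ProperSpace M] [TopologicalSpace.SeparableSpace M]
  [MeasurableSpace M] [BorelSpace M]

instance : MeasurableSpace C(ℝ, M) := borel _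
instance : BorelSpace C(ℝ, M) := ⟨rfl⟩

/-- Representation of a path: a starting time together with a continuous map `ℝ → M`
(its constant-before-the-start extension). -/
abbrev PathP (M : Type*) [MetricSpace M] : Type _ := ℝ × C(ℝ, M)

/-- Restriction of a path to `[r, ∞)`, as an element of the path space. -/
def restrictP (p : PathP M) (r : ℝ) : PathP M :=
  (r, p.2.comp ⟨fun t => max r t, continuous_const.max continuous_id⟩)

/-- The set `S(M)` of skeletons: sequences of paths satisfying constancy before the
starting time together with (Sk1) coalescence, (Sk2) denseness of the starting points,
and (Sk3) relative compactness of restrictions over compact sets. -/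
def SkelSet (M : Type*) [MetricSpace M] : Set (ℕ → PathP M) :=
  {φ | (∀ n, ∀ t ≤ (φ n).1, (φ n).2 t = (φ n).2 (φ n).1) ∧
    (∀ m n r, (φ m).1 ≤ r → (φ n).1 ≤ r → (φ m).2 r = (φ n).2 r →
      ∀ t, r ≤ t → (φ m).2 t = (φ n).2 t) ∧
    Dense {q : ℝ × M | ∃ n, q = ((φ n).1, (φ n).2 (φ n).1)} ∧
    ∀ L : Set (ℝ × M), IsCompact L →
      IsCompact (closure {p : PathP M | ∃ n r, (φ n).1 ≤ r ∧ (r, (φ n).2 r) ∈ L ∧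
        p = restrictP (φ n) r})}

/-- The measurable space of skeletons. -/
abbrev Skel (M : Type*) [MetricSpace M] : Type _ := (SkelSet M : Set (ℕ → PathP M))

/-- `n_k^{s,x}`: the first index `n ∈ I^s` with `ρ(φ_n(s), x) < ε_k(x)`. -/
def nIdx (ε : ℕ → M → ℝ) (r : ℝ) (x : M) (φ : ℕ → PathP M) (k : ℕ) : ℕ :=
  sInf {n : ℕ | (φ n).1 ≤ r ∧ dist ((φ n).2 r) x < ε k x}

/-- The map `Θ(s, x, φ) = ℓ((φ^{s,x}_k)_k)`, where `φ^{s,x}_k = φ_{n_k^{s,x}}[s,∞)`. -/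
def Theta (ℓ : (ℕ → PathP M) → PathP M) (ε : ℕ → M → ℝ)
    (q : ℝ × M × Skel M) : PathP M :=
  ℓ (fun k => restrictP (q.2.2.val (nIdx ε q.1 q.2.1 q.2.2.val k)) q.1)

instance : SecondCountableTopology M := UniformSpace.secondCountable_of_separable M
lemma continuous_restrictP : Continuous fun q : PathP M × ℝ => restrictP q.1 q.2 := by
  unfold restrictP
  refine continuous_snd.prodMk ?_
  have h1 : Continuous fun r : ℝ => (⟨fun t => max r t, by fun_prop⟩ : C(ℝ, ℝ)) :=
    ContinuousMap.continuous_of_continuous_uncurry _ (continuous_fst.max continuous_snd)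
  exact ContinuousMap.continuous_comp'.comp ((h1.comp continuous_snd).prodMk
    (continuous_snd.comp continuous_fst))
lemma MapClusterPt.eq_of_tendsto' {X : Type*} [TopologicalSpace X] [T2Space X] {ι : Type*}
    {F : Filter ι} [F.NeBot] {u : ι → X} {a b : X} (h : MapClusterPt a F u)
    (h' : Tendsto u F (nhds b)) : a = b := by
  have h2 : Filter.NeBot (nhds a ⊓ map u F) := h
  exact eq_of_nhds_neBot (h2.mono (inf_le_inf_left _ h'))

lemma measurable_natInf {α : Type*} [MeasurableSpace α] {A : ℕ → Set α}
    (hA : ∀ n, MeasurableSet (A n)) :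
    Measurable fun a => sInf {n | a ∈ A n} := by
  have key : ∀ k : ℕ, MeasurableSet {a | sInf {n | a ∈ A n} ≤ k} := by
    intro k
    have : {a | sInf {n | a ∈ A n} ≤ k} = (⋃ m ≤ k, A m) ∪ ⋂ m, (A m)ᶜ := by
      ext a
      simp only [Set.mem_setOf_eq, Set.mem_union, Set.mem_iUnion, Set.mem_iInter,
        Set.mem_compl_iff]
      constructor
      · intro h
        by_cases hne : {n | a ∈ A n}.Nonempty
        · exact Or.inl ⟨_, h, Nat.sInf_mem hne⟩
        · exact Or.inr fun m hm => hne ⟨m, hm⟩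
      · rintro (⟨m, hm, ha⟩ | h)
        · exact le_trans (Nat.sInf_le ha) hm
        · have : {n | a ∈ A n} = ∅ := Set.eq_empty_iff_forall_notMem.2 h
          simp [this, Nat.sInf_empty]
    rw [this]
    exact ((MeasurableSet.biUnion (Set.to_countable _) fun m _ => hA m).union
      (MeasurableSet.iInter fun m => (hA m).compl))
  apply measurable_to_countable'
  intro k
  match k with
  | 0 =>
    have : (fun a => sInf {n | a ∈ A n}) ⁻¹' {0} = {a | sInf {n | a ∈ A n} ≤ 0} := by
      ext a; simp [Nat.le_zero]
    rw [this]; exact key 0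
  | (k+1) =>
    have : (fun a => sInf {n | a ∈ A n}) ⁻¹' {k+1}
        = {a | sInf {n | a ∈ A n} ≤ k+1} \ {a | sInf {n | a ∈ A n} ≤ k} := by
      ext a; simp only [Set.mem_preimage, Set.mem_singleton_iff, Set.mem_diff,
        Set.mem_setOf_eq]
      omega
    rw [this]; exact (key (k+1)).diff (key k)

lemma measurable_apply_nat {α X : Type*} [MeasurableSpace α] [MeasurableSpace X]
    {f : α → ℕ → X} (hf : Measurable f) {g : α → ℕ} (hg : Measurable g) :
    Measurable fun a => f a (g a) := by
  intro s hs
  have : (fun a => f a (g a)) ⁻¹' s = ⋃ n, {a | g a = n} ∩ (fun a => f a n) ⁻¹' s := by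
    ext a
    simp only [Set.mem_preimage, Set.mem_iUnion, Set.mem_inter_iff, Set.mem_setOf_eq]
    exact ⟨fun h => ⟨g a, rfl, h⟩, fun ⟨n, hn, h⟩ => by rwa [hn]⟩
  rw [this]
  exact MeasurableSet.iUnion fun n =>
    (hg (measurableSet_singleton n)).inter (hf.eval hs)
omit [ProperSpace M] [MeasurableSpace M] [BorelSpace M] in
lemma eval_cont : Continuous fun p : PathP M => p.2 p.1 :=
  continuous_eval.comp (continuous_snd.prodMk continuous_fst)

omit [MeasurableSpace M] [BorelSpace M] in
lemma past_dense {φ : ℕ → PathP M} (hφ : φ ∈ SkelSet M) (r : ℝ) (x : M) :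
    ∀ e > 0, ∃ n, (φ n).1 ≤ r ∧ dist ((φ n).2 r) x < e := by
  obtain ⟨hconst, hcoal, hdense, hcpt⟩ := hφ
  intro e he
  have hsel : ∀ j : ℕ, ∃ n, (φ n).1 ≤ r ∧ |(φ n).1 - r| < 2/(j+1) ∧
      dist ((φ n).2 (φ n).1) x < 1/(j+1) := by
    intro j
    have hj : (0:ℝ) < 1/(j+1 : ℝ) := by positivity
    obtain ⟨q, hq1, hq2⟩ := Metric.dense_iff.1 hdense (r - 1/(j+1), x) _ hj
    obtain ⟨n, rfl⟩ := hq2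
    rw [Metric.mem_ball, Prod.dist_eq, max_lt_iff] at hq1
    obtain ⟨h1, h2⟩ := hq1
    dsimp only at h1 h2
    rw [Real.dist_eq] at h1
    have hd : 2/(j+1:ℝ) = 1/(j+1) + 1/(j+1) := by ring
    have h3 := abs_lt.1 h1
    refine ⟨n, by linarith [h3.2], ?_, by simpa [dist_comm] using h2⟩
    rw [abs_lt, hd]; constructor <;> linarith [h3.1, h3.2, hj]
  choose nn hnn1 hnn2 hnn3 using hsel
  set s : ℕ → ℝ := fun j => (φ (nn j)).1 with hs
  set ψ : ℕ → PathP M := fun j => restrictP (φ (nn j)) (s j) with hψ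
  -- compactness
  have hL : IsCompact ((Set.Icc (r-2) r ×ˢ Metric.closedBall x 1 : Set (ℝ × M))) :=
    isCompact_Icc.prod (isCompact_closedBall x 1)
  have hK := hcpt _ hL
  have hmem : ∀ j, ψ j ∈ closure {p : PathP M | ∃ n ρ, (φ n).1 ≤ ρ ∧
      (ρ, (φ n).2 ρ) ∈ (Set.Icc (r-2) r ×ˢ Metric.closedBall x 1 : Set (ℝ × M)) ∧
      p = restrictP (φ n) ρ} := by
    intro j
    apply subset_closure
    refine ⟨nn j, s j, le_refl _, ⟨?_, ?_⟩, rfl⟩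
    · have h1 := abs_lt.1 (hnn2 j)
      have h2 : 2/(j+1:ℝ) ≤ 2 := by
        rw [div_le_iff₀ (by positivity)]; nlinarith [Nat.cast_nonneg (α := ℝ) j]
      exact ⟨by linarith [h1.1], hnn1 j⟩
    · have h2 : 1/(j+1:ℝ) ≤ 1 := by
        rw [div_le_one (by positivity)]; linarith [Nat.cast_nonneg (α := ℝ) j]
      exact Metric.mem_closedBall.2 (le_trans (le_of_lt (hnn3 j)) h2)
  -- a cluster point
  obtain ⟨a, _, haM⟩ := hK.exists_mapClusterPt (f := atTop) (u := ψ)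
    (le_principal_iff.2 (mem_map.2 (univ_mem' hmem)))
  -- s j → r
  have hsr : Tendsto s atTop (nhds r) := by
    rw [tendsto_iff_dist_tendsto_zero]
    apply squeeze_zero (fun j => dist_nonneg) (fun j => le_of_lt (by
      rw [Real.dist_eq]; exact hnn2 j))
    have : Tendsto (fun j : ℕ => 2/(j+1:ℝ)) atTop (nhds 0) := by
      apply Tendsto.div_atTop tendsto_const_nhds
      exact tendsto_atTop_add_const_right _ _ tendsto_natCast_atTop_atTop
    exact this
  -- a.1 = r
  have ha1 : a.1 = r := by
    have := haM.continuousAt_comp (f := Prod.fst) continuous_fst.continuousAt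
    have heq : (Prod.fst ∘ ψ) = s := rfl
    rw [heq] at this
    exact this.eq_of_tendsto' hsr
  -- a.2 r = x
  have ha2 : a.2 r = x := by
    have h := haM.continuousAt_comp (f := fun p : PathP M => p.2 p.1)
      eval_cont.continuousAt
    have heq : ((fun p : PathP M => p.2 p.1) ∘ ψ) = fun j => (φ (nn j)).2 (s j) := by
      funext j; simp [hψ, restrictP, max_self]
    rw [heq] at h
    have htend : Tendsto (fun j => (φ (nn j)).2 (s j)) atTop (nhds x) := by
      rw [tendsto_iff_dist_tendsto_zero]
      apply squeeze_zero (fun j => dist_nonneg) (fun j => le_of_lt (hnn3 j))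
      apply Tendsto.div_atTop tendsto_const_nhds
      exact tendsto_atTop_add_const_right _ _ tendsto_natCast_atTop_atTop
    have h5 := h.eq_of_tendsto' htend
    change a.2 a.1 = x at h5
    rw [ha1] at h5; exact h5
  -- conclude via eval at r
  have h3 := haM.continuousAt_comp (f := fun p : PathP M => p.2 r)
    (continuous_eval_const r |>.comp continuous_snd).continuousAt
  have heq : ((fun p : PathP M => p.2 r) ∘ ψ) = fun j => (φ (nn j)).2 r := by
    funext j; simp only [hψ, restrictP, Function.comp_apply, ContinuousMap.comp_apply,
      ContinuousMap.coe_mk]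
    rw [max_eq_right (hnn1 j)]
  rw [heq] at h3
  change MapClusterPt (a.2 r) atTop _ at h3
  rw [ha2] at h3
  obtain ⟨j, hj⟩ := (mapClusterPt_iff_frequently.1 h3 (Metric.ball x e) (Metric.ball_mem_nhds x he)).exists
  exact ⟨nn j, hnn1 j, by simpa [Metric.mem_ball] using hj⟩

omit [MeasurableSpace M] [BorelSpace M] in
lemma nIdx_spec {φ : ℕ → PathP M} (hφ : φ ∈ SkelSet M) {ε : ℕ → M → ℝ}
    (hεpos : ∀ k x, 0 < ε k x) (r : ℝ) (x : M) (k : ℕ) :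
    (φ (nIdx ε r x φ k)).1 ≤ r ∧ dist ((φ (nIdx ε r x φ k)).2 r) x < ε k x := by
  have hne : {n : ℕ | (φ n).1 ≤ r ∧ dist ((φ n).2 r) x < ε k x}.Nonempty := by
    obtain ⟨n, h1, h2⟩ := past_dense hφ r x (ε k x) (hεpos k x)
    exact ⟨n, h1, h2⟩
  exact Nat.sInf_mem hne

omit [MeasurableSpace M] [BorelSpace M] in
lemma closure_range_compact {φ : ℕ → PathP M} (hφ : φ ∈ SkelSet M) (r : ℝ) (x : M) (C : ℝ)
    {u : ℕ → PathP M}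
    (hu : ∀ k, ∃ n, (φ n).1 ≤ r ∧ dist ((φ n).2 r) x ≤ C ∧ u k = restrictP (φ n) r) :
    IsCompact (closure (Set.range u)) := by
  obtain ⟨-, -, -, hcpt⟩ := hφ
  have hL : IsCompact (({r} : Set ℝ) ×ˢ Metric.closedBall x C) :=
    isCompact_singleton.prod (isCompact_closedBall x C)
  have hK := hcpt _ hL
  apply IsCompact.of_isClosed_subset hK isClosed_closure
  apply closure_minimal _ isClosed_closure
  rintro p ⟨k, rfl⟩
  obtain ⟨n, h1, h2, h3⟩ := hu k
  exact subset_closure ⟨n, r, h1, ⟨rfl, Metric.mem_closedBall.2 h2⟩, h3⟩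

lemma nat_mono_bdd_eventually_const {m : ℕ → ℕ} (hm : Monotone m) {N : ℕ} (hN : ∀ k, m k ≤ N) :
    ∃ K, ∀ k, K ≤ k → m k = m K := by
  have hbdd : BddAbove (Set.range m) := ⟨N, by rintro _ ⟨k, rfl⟩; exact hN k⟩
  have hne : (Set.range m).Nonempty := ⟨m 0, 0, rfl⟩
  obtain ⟨K, hK⟩ := Nat.sSup_mem hne hbdd
  exact ⟨K, fun k hk => le_antisymm (hK ▸ le_csSup hbdd ⟨k, rfl⟩) (hm hk)⟩

/-- **Measurability and properties of `Θ`.** Let `ℓ` be a measurable limit-point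
selection on the path space and `(ε_k)` a nonincreasing sequence of positive measurable
functions converging pointwise to `0`.  Then the map
`Θ : ℝ × M × S(M) → X`, `Θ(s,x,φ) = ℓ((φ^{s,x}_k)_k)`, is measurable, and for every
`(s, φ)`: (a) `Θ(s,x,φ)` is a path of `C([s,∞) : M)` starting at `x`, for every `x`;
(b) `Θ(s, φ_n(s), φ) = φ_n[s,∞)` for every `n` with `s_n ≤ s`. -/
theorem Theta_measurable_and_extends
    (ℓ : (ℕ → PathP M) → PathP M) (hℓmeas : Measurable ℓ)
    (hℓsel : ∀ u : ℕ → PathP M, IsCompact (closure (Set.range u)) →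
      MapClusterPt (ℓ u) atTop u)
    (ε : ℕ → M → ℝ) (hεmeas : ∀ k, Measurable (ε k))
    (hεanti : ∀ x, Antitone fun k => ε k x)
    (hεpos : ∀ k x, 0 < ε k x)
    (hεlim : ∀ x, Tendsto (fun k => ε k x) atTop (nhds 0)) :
    Measurable (Theta (M := M) ℓ ε) ∧
    (∀ (r : ℝ) (x : M) (φ : Skel M),
      (Theta ℓ ε (r, x, φ)).1 = r ∧
      (Theta ℓ ε (r, x, φ)).2 r = x ∧
      ∀ t ≤ r, (Theta ℓ ε (r, x, φ)).2 t = (Theta ℓ ε (r, x, φ)).2 r) ∧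
    (∀ (r : ℝ) (φ : Skel M) (n : ℕ), (φ.val n).1 ≤ r →
      Theta ℓ ε (r, (φ.val n).2 r, φ) = restrictP (φ.val n) r) := by
  refine ⟨?_, ?_, ?_⟩
  · -- measurability
    apply hℓmeas.comp
    apply measurable_pi_lambda
    intro k
    have hφmeas : ∀ n, Measurable fun q : ℝ × M × Skel M => q.2.2.1 n := fun n =>
      (measurable_pi_apply n).comp (measurable_subtype_coe.comp
        (measurable_snd.comp measurable_snd))
    have hevaln : ∀ n, Measurable fun q : ℝ × M × Skel M => (q.2.2.1 n).2 q.1 := fun n =>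
      (continuous_eval (F := C(ℝ, M)) (X := ℝ) (Y := M)).measurable.comp
        ((measurable_snd.comp (hφmeas n)).prodMk measurable_fst)
    have hA : ∀ n, MeasurableSet {q : ℝ × M × Skel M |
        (q.2.2.1 n).1 ≤ q.1 ∧ dist ((q.2.2.1 n).2 q.1) q.2.1 < ε k q.2.1} := fun n =>
      (measurableSet_le (measurable_fst.comp (hφmeas n)) measurable_fst).inter
        (measurableSet_lt (measurable_dist.comp ((hevaln n).prodMk
            (measurable_fst.comp measurable_snd)))
          ((hεmeas k).comp (measurable_fst.comp measurable_snd)))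
    have hN : Measurable fun q : ℝ × M × Skel M => nIdx ε q.1 q.2.1 q.2.2.1 k :=
      measurable_natInf hA
    have hG : Measurable fun q : ℝ × M × Skel M => q.2.2.1 (nIdx ε q.1 q.2.1 q.2.2.1 k) :=
      measurable_apply_nat (measurable_subtype_coe.comp
        (measurable_snd.comp measurable_snd)) hN
    exact continuous_restrictP.measurable.comp (hG.prodMk measurable_fst)
  · -- (a)
    intro r x φ
    set u : ℕ → PathP M := fun k => restrictP (φ.1 (nIdx ε r x φ.1 k)) r with hu
    have hTh : Theta ℓ ε (r, x, φ) = ℓ u := rfl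
    have hspec : ∀ k, (φ.1 (nIdx ε r x φ.1 k)).1 ≤ r ∧
        dist ((φ.1 (nIdx ε r x φ.1 k)).2 r) x < ε k x := fun k => nIdx_spec φ.2 hεpos r x k
    have hcpt : IsCompact (closure (Set.range u)) :=
      closure_range_compact φ.2 r x (ε 0 x) (fun k => ⟨_, (hspec k).1,
        le_trans (le_of_lt (hspec k).2) (hεanti x (Nat.zero_le k)), rfl⟩)
    have hcl := hℓsel u hcpt
    have htend : Tendsto (fun k => (φ.1 (nIdx ε r x φ.1 k)).2 r) atTop (nhds x) := by
      rw [tendsto_iff_dist_tendsto_zero]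
      exact squeeze_zero (fun k => dist_nonneg) (fun k => le_of_lt (hspec k).2) (hεlim x)
    have key : ∀ t : ℝ, t ≤ r → (ℓ u).2 t = x := by
      intro t ht
      have h2 := hcl.continuousAt_comp (f := fun p : PathP M => p.2 t)
        ((continuous_eval_const t).comp continuous_snd).continuousAt
      have heq : ((fun p : PathP M => p.2 t) ∘ u) = fun k => (φ.1 (nIdx ε r x φ.1 k)).2 r := by
        funext k
        simp only [hu, Function.comp_apply, restrictP, ContinuousMap.comp_apply,
          ContinuousMap.coe_mk]
        rw [max_eq_left ht]
      rw [heq] at h2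
      exact h2.eq_of_tendsto' htend
    have h1 : (ℓ u).1 = r := by
      have h := hcl.continuousAt_comp (f := Prod.fst) continuous_fst.continuousAt
      have heq : (Prod.fst ∘ u) = fun _ => r := rfl
      rw [heq] at h
      exact h.eq_of_tendsto' tendsto_const_nhds
    rw [hTh]
    exact ⟨h1, key r le_rfl, fun t ht => by rw [key t ht, key r le_rfl]⟩
  · -- (b)
    intro r φ n hn
    set x : M := (φ.1 n).2 r with hx
    set m : ℕ → ℕ := fun k => nIdx ε r x φ.1 k with hm
    set u : ℕ → PathP M := fun k => restrictP (φ.1 (m k)) r with hu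
    have hTh : Theta ℓ ε (r, x, φ) = ℓ u := rfl
    have hspec : ∀ k, (φ.1 (m k)).1 ≤ r ∧ dist ((φ.1 (m k)).2 r) x < ε k x :=
      fun k => nIdx_spec φ.2 hεpos r x k
    have hnmem : ∀ k, n ∈ {i : ℕ | (φ.1 i).1 ≤ r ∧ dist ((φ.1 i).2 r) x < ε k x} :=
      fun k => ⟨hn, by simp [hx, dist_self, hεpos k]⟩
    have hle : ∀ k, m k ≤ n := fun k => Nat.sInf_le (hnmem k)
    have hmono : Monotone m := by
      intro k k' hkk'
      apply csInf_le_csInf (OrderBot.bddBelow _) ⟨n, hnmem k'⟩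
      intro i hi
      exact ⟨hi.1, lt_of_lt_of_le hi.2 (hεanti x hkk')⟩
    obtain ⟨K, hK⟩ := nat_mono_bdd_eventually_const hmono hle
    have hdist0 : dist ((φ.1 (m K)).2 r) x = 0 := by
      by_contra hne
      have hd : 0 < dist ((φ.1 (m K)).2 r) x :=
        lt_of_le_of_ne dist_nonneg (Ne.symm hne)
      obtain ⟨k, hk1, hk2⟩ :=
        (((hεlim x).eventually (eventually_lt_nhds hd)).and (eventually_ge_atTop K)).exists
      have := (hspec k).2
      rw [hK k hk2] at this
      exact absurd this (not_lt.2 (le_of_lt hk1))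
    have heqx : (φ.1 (m K)).2 r = (φ.1 n).2 r := by
      rw [← hx]; exact dist_eq_zero.1 hdist0
    obtain ⟨hconst, hcoal, hdense, hcptS⟩ := φ.2
    have hco := hcoal (m K) n r (hspec K).1 hn heqx
    have hueq : ∀ k, K ≤ k → u k = restrictP (φ.1 n) r := by
      intro k hk
      show restrictP (φ.1 (m k)) r = restrictP (φ.1 n) r
      rw [hK k hk]
      unfold restrictP
      refine congrArg (Prod.mk r) ?_
      ext t
      simp only [ContinuousMap.comp_apply, ContinuousMap.coe_mk]
      exact hco (max r t) (le_max_left _ _)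
    have htend : Tendsto u atTop (nhds (restrictP (φ.1 n) r)) :=
      tendsto_const_nhds.congr' (eventually_atTop.2 ⟨K, fun k hk => (hueq k hk).symm⟩)
    have hcpt' : IsCompact (closure (Set.range u)) :=
      closure_range_compact φ.2 r x (ε 0 x) (fun k => ⟨m k, (hspec k).1,
        le_trans (le_of_lt (hspec k).2) (hεanti x (Nat.zero_le k)), rfl⟩)
    have hcl := hℓsel u hcpt'
    exact hTh.trans (hcl.eq_of_tendsto' htend)

end
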